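/- (Continuity of weighted projections onto the cones, part (i).) Let Ω_n be a sequence of symmetric positive definite K×K real matrices with Ω_n → Ω₀ as n → ∞, where Ω₀ is symmetric positive definite; let y_n ∈ ℝ^K be a sequence with y_n → y₀ ∈ ℝ^K; and let w_n ∈ Δ be an arbitrary sequence. Then ‖Π_{Ω_n}(y_n | Λ(w_n)) − Π_{Ω₀}(y₀ | Λ(w_n))‖ → 0 as n → ∞. -/

import Mathlib

open Matrix Filter

/-- The simplex `Δ = {w ∈ ℝ^K : w_j ≥ 0 for all j, Σ_j w_j = 1}`. -/
def simplex (K : ℕ) : Set (Fin K → ℝ) :=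
  {w | (∀ j, 0 ≤ w j) ∧ ∑ j, w j = 1}

/-- The `Ω`-weighted norm `‖x‖_Ω = √(xᵀΩ⁻¹x)`. -/
noncomputable def wnorm {K : ℕ} (Ω : Matrix (Fin K) (Fin K) ℝ) (x : Fin K → ℝ) : ℝ :=
  Real.sqrt (x ⬝ᵥ (Ω⁻¹ *ᵥ x))

section Aux

variable {K : ℕ}

private lemma posdef_quad_pos {M : Matrix (Fin K) (Fin K) ℝ} (hM : M.PosDef)
    {x : Fin K → ℝ} (hx : x ≠ 0) : 0 < x ⬝ᵥ M *ᵥ x := by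
  simpa using hM.re_dotProduct_pos hx

private lemma posdef_quad_nonneg {M : Matrix (Fin K) (Fin K) ℝ} (hM : M.PosDef)
    (x : Fin K → ℝ) : 0 ≤ x ⬝ᵥ M *ᵥ x := by
  rcases eq_or_ne x 0 with h | h
  · simp [h]
  · exact (posdef_quad_pos hM h).le

private lemma aux_bdd (u : ℕ → ℝ) (C : ℝ) (h : ∀ᶠ n in atTop, u n ≤ C) :
    ∃ C', ∀ n, u n ≤ C' := by
  obtain ⟨N, hN⟩ := eventually_atTop.mp h
  refine ⟨max C 0 + ∑ i ∈ Finset.range N, |u i|, fun n => ?_⟩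
  have hsum : (0:ℝ) ≤ ∑ i ∈ Finset.range N, |u i| :=
    Finset.sum_nonneg fun i _ => abs_nonneg _
  rcases le_or_gt N n with hn | hn
  · have := hN n hn
    have : u n ≤ max C 0 := this.trans (le_max_left _ _)
    linarith
  · have h1 : |u n| ≤ ∑ i ∈ Finset.range N, |u i| :=
      Finset.single_le_sum (fun i _ => abs_nonneg (u i)) (Finset.mem_range.mpr hn)
    have h2 : u n ≤ |u n| := le_abs_self _
    have h3 : (0:ℝ) ≤ max C 0 := le_max_right _ _
    linarith

private lemma quad_abs_le (D : Matrix (Fin K) (Fin K) ℝ) (x : Fin K → ℝ) :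
    |x ⬝ᵥ D *ᵥ x| ≤ (∑ i, ∑ j, |D i j|) * ∑ j, x j ^ 2 := by
  have hS : ∀ i, x i ^ 2 ≤ ∑ j, x j ^ 2 := fun i =>
    Finset.single_le_sum (fun j _ => sq_nonneg (x j)) (Finset.mem_univ i)
  have hx2 : (0:ℝ) ≤ ∑ j, x j ^ 2 := Finset.sum_nonneg fun j _ => sq_nonneg _
  have hexp : x ⬝ᵥ D *ᵥ x = ∑ i, ∑ j, x i * (D i j * x j) := by
    simp [dotProduct, mulVec, Finset.mul_sum]
  rw [hexp, Finset.sum_mul]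
  refine (Finset.abs_sum_le_sum_abs _ _).trans (Finset.sum_le_sum fun i _ => ?_)
  rw [Finset.sum_mul]
  refine (Finset.abs_sum_le_sum_abs _ _).trans (Finset.sum_le_sum fun j _ => ?_)
  have h1 : |x i * (D i j * x j)| = |D i j| * (|x i| * |x j|) := by
    rw [abs_mul, abs_mul]; ring
  rw [h1]
  refine mul_le_mul_of_nonneg_left ?_ (abs_nonneg _)
  have h2 : |x i| * |x j| ≤ (x i ^ 2 + x j ^ 2) / 2 := by
    nlinarith [sq_nonneg (|x i| - |x j|), sq_abs (x i), sq_abs (x j)]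
  have := hS i; have := hS j
  linarith

private lemma quad_cont :
    Continuous fun z : Matrix (Fin K) (Fin K) ℝ × (Fin K → ℝ) => z.2 ⬝ᵥ z.1 *ᵥ z.2 :=
  (continuous_snd.dotProduct (continuous_fst.matrix_mulVec continuous_snd))

private lemma coercive (hK : 0 < K) (A : Matrix (Fin K) (Fin K) ℝ) (hA : A.PosDef) :
    ∃ m > (0:ℝ), ∀ x : Fin K → ℝ, m * ∑ j, x j ^ 2 ≤ x ⬝ᵥ A *ᵥ x := by
  set S : Set (Fin K → ℝ) := {x | ∑ j, x j ^ 2 = 1} with hSdef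
  have hScont : Continuous fun x : Fin K → ℝ => ∑ j, x j ^ 2 :=
    continuous_finset_sum _ fun j _ => (continuous_apply j).pow 2
  have hSclosed : IsClosed S := isClosed_eq hScont continuous_const
  have hSbdd : Bornology.IsBounded S := by
    refine (Metric.isBounded_iff_subset_closedBall 0).mpr ⟨1, fun x hx => ?_⟩
    rw [Metric.mem_closedBall, dist_zero_right]
    refine (pi_norm_le_iff_of_nonneg zero_le_one).mpr fun j => ?_
    have h1 : x j ^ 2 ≤ 1 := by
      have := Finset.single_le_sum (f := fun j => x j ^ 2)
        (fun j _ => sq_nonneg (x j)) (Finset.mem_univ j)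
      rw [hx] at this; exact this
    rw [Real.norm_eq_abs]
    nlinarith [abs_nonneg (x j), sq_abs (x j)]
  have hScompact : IsCompact S := Metric.isCompact_of_isClosed_isBounded hSclosed hSbdd
  have hSne : S.Nonempty := by
    refine ⟨Pi.single ⟨0, hK⟩ 1, ?_⟩
    simp [hSdef, Pi.single_apply]
  obtain ⟨u, huS, humin⟩ := hScompact.exists_isMinOn hSne
    (quad_cont.comp (Continuous.prodMk_right A)).continuousOn
  have hu0 : u ≠ 0 := by
    intro h
    rw [hSdef] at huS
    simp [h] at huS
  refine ⟨u ⬝ᵥ A *ᵥ u, posdef_quad_pos hA hu0, fun x => ?_⟩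
  rcases eq_or_ne x 0 with rfl | hx
  · simp
  · set c : ℝ := Real.sqrt (∑ j, x j ^ 2) with hc
    have hsum_pos : 0 < ∑ j, x j ^ 2 := by
      rcases Function.ne_iff.mp hx with ⟨j, hj⟩
      have hj' : x j ≠ 0 := by simpa using hj
      have h1 : 0 < x j ^ 2 := lt_of_le_of_ne (sq_nonneg _) (Ne.symm (pow_ne_zero 2 hj'))
      exact h1.trans_le (Finset.single_le_sum (fun j _ => sq_nonneg (x j)) (Finset.mem_univ j))
    have hcpos : 0 < c := Real.sqrt_pos.mpr hsum_pos
    set v : Fin K → ℝ := c⁻¹ • x with hv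
    have hvS : v ∈ S := by
      rw [hSdef]
      have : ∑ j, (c⁻¹ * x j) ^ 2 = c⁻¹ ^ 2 * ∑ j, x j ^ 2 := by
        rw [Finset.mul_sum]; exact Finset.sum_congr rfl fun j _ => by ring
      have hc2 : c ^ 2 = ∑ j, x j ^ 2 := Real.sq_sqrt hsum_pos.le
      simp only [hv, Set.mem_setOf_eq, Pi.smul_apply, smul_eq_mul]
      rw [this, ← hc2]
      field_simp
    have hxv : x = c • v := by
      rw [hv, smul_smul, mul_inv_cancel₀ hcpos.ne', one_smul]
    have hquad : x ⬝ᵥ A *ᵥ x = c ^ 2 * (v ⬝ᵥ A *ᵥ v) := by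
      rw [hxv, smul_dotProduct, mulVec_smul, dotProduct_smul]
      simp [smul_eq_mul]; ring
    have hc2 : c ^ 2 = ∑ j, x j ^ 2 := Real.sq_sqrt hsum_pos.le
    have := humin hvS
    rw [hquad, ← hc2]
    calc u ⬝ᵥ A *ᵥ u * c ^ 2 ≤ (v ⬝ᵥ A *ᵥ v) * c ^ 2 := by
          have : u ⬝ᵥ A *ᵥ u ≤ v ⬝ᵥ A *ᵥ v := this
          nlinarith [sq_nonneg c]
      _ = c ^ 2 * (v ⬝ᵥ A *ᵥ v) := by ring

private lemma quad_parallelogram (A : Matrix (Fin K) (Fin K) ℝ) (a c : Fin K → ℝ) :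
    ((1:ℝ)/2) • (a + c) ⬝ᵥ A *ᵥ (((1:ℝ)/2) • (a + c)) =
      (a ⬝ᵥ A *ᵥ a + c ⬝ᵥ A *ᵥ c) / 2 - (a - c) ⬝ᵥ A *ᵥ (a - c) / 4 := by
  simp only [smul_dotProduct, mulVec_smul, dotProduct_smul, mulVec_add, mulVec_sub,
    add_dotProduct, sub_dotProduct, dotProduct_add, dotProduct_sub, smul_eq_mul]
  ring

private lemma quad_tendsto {K : ℕ} {A : ℕ → Matrix (Fin K) (Fin K) ℝ}
    {M : Matrix (Fin K) (Fin K) ℝ} {v : ℕ → (Fin K → ℝ)} {v₀ : Fin K → ℝ}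
    (hA : Tendsto A atTop (nhds M)) (hv : Tendsto v atTop (nhds v₀)) :
    Tendsto (fun n => v n ⬝ᵥ A n *ᵥ v n) atTop (nhds (v₀ ⬝ᵥ M *ᵥ v₀)) := by
  have hvi : ∀ i, Tendsto (fun n => v n i) atTop (nhds (v₀ i)) := fun i =>
    tendsto_pi_nhds.mp hv i
  have hAij : ∀ i j, Tendsto (fun n => A n i j) atTop (nhds (M i j)) := fun i j =>
    tendsto_pi_nhds.mp (tendsto_pi_nhds.mp hA i) j
  simp only [dotProduct, mulVec]
  exact tendsto_finset_sum _ fun i _ =>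
    (hvi i).mul (tendsto_finset_sum _ fun j _ => (hAij i j).mul (hvi j))

end Aux

set_option maxHeartbeats 1000000 in
theorem stmt14 {K : ℕ} (hK : 0 < K)
    (Ωn : ℕ → Matrix (Fin K) (Fin K) ℝ) (hΩn : ∀ n, (Ωn n).PosDef)
    (Ω₀ : Matrix (Fin K) (Fin K) ℝ) (hΩ₀ : Ω₀.PosDef)
    (hΩconv : Tendsto Ωn atTop (nhds Ω₀))
    (y : ℕ → (Fin K → ℝ)) (y₀ : Fin K → ℝ)
    (hyconv : Tendsto y atTop (nhds y₀))
    (w : ℕ → (Fin K → ℝ)) (hw : ∀ n, w n ∈ simplex K)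
    (p q : ℕ → (Fin K → ℝ))
    (hpmem : ∀ n, (∀ j, p n j ≤ 0) ∧ w n ⬝ᵥ p n = 0)
    (hpmin : ∀ n, ∀ x : Fin K → ℝ, (∀ j, x j ≤ 0) → w n ⬝ᵥ x = 0 →
      wnorm (Ωn n) (y n - p n) ≤ wnorm (Ωn n) (y n - x))
    (hqmem : ∀ n, (∀ j, q n j ≤ 0) ∧ w n ⬝ᵥ q n = 0)
    (hqmin : ∀ n, ∀ x : Fin K → ℝ, (∀ j, x j ≤ 0) → w n ⬝ᵥ x = 0 →
      wnorm Ω₀ (y₀ - q n) ≤ wnorm Ω₀ (y₀ - x)) :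
    Tendsto (fun n => Real.sqrt (∑ j, (p n j - q n j) ^ 2)) atTop (nhds 0) := by
  classical
  set A : ℕ → Matrix (Fin K) (Fin K) ℝ := fun n => (Ωn n)⁻¹ with hAdef
  have hAn : ∀ n, (A n).PosDef := fun n => (hΩn n).inv
  have hA0 : (Ω₀⁻¹).PosDef := hΩ₀.inv
  -- convergence of the inverses
  have hAconv : Tendsto A atTop (nhds Ω₀⁻¹) := by
    have hdet : Tendsto (fun n => (Ωn n).det) atTop (nhds Ω₀.det) :=
      (Continuous.matrix_det continuous_id).continuousAt.tendsto.comp hΩconv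
    have hadj : Tendsto (fun n => (Ωn n).adjugate) atTop (nhds Ω₀.adjugate) :=
      (Continuous.matrix_adjugate continuous_id).continuousAt.tendsto.comp hΩconv
    have hdetinv : Tendsto (fun n => ((Ωn n).det)⁻¹) atTop (nhds (Ω₀.det)⁻¹) :=
      hdet.inv₀ hΩ₀.det_pos.ne'
    have : Tendsto (fun n => ((Ωn n).det)⁻¹ • (Ωn n).adjugate) atTop
        (nhds ((Ω₀.det)⁻¹ • Ω₀.adjugate)) := hdetinv.smul hadj
    simpa only [hAdef, Matrix.inv_def, Ring.inverse_eq_inv'] using this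
  have hdiff : Tendsto (fun n => ∑ i, ∑ j, |(A n - Ω₀⁻¹) i j|) atTop (nhds 0) := by
    have hentry : ∀ i j, Tendsto (fun n => A n i j) atTop (nhds (Ω₀⁻¹ i j)) := fun i j =>
      tendsto_pi_nhds.mp (tendsto_pi_nhds.mp hAconv i) j
    have : Tendsto (fun n => ∑ i, ∑ j, |(A n - Ω₀⁻¹) i j|) atTop
        (nhds (∑ i : Fin K, ∑ j : Fin K, |(0:ℝ)|)) := by
      refine tendsto_finset_sum _ fun i _ => tendsto_finset_sum _ fun j _ => ?_
      have : Tendsto (fun n => A n i j - Ω₀⁻¹ i j) atTop (nhds 0) := by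
        simpa using (hentry i j).sub (tendsto_const_nhds (x := Ω₀⁻¹ i j))
      simpa [Matrix.sub_apply] using this.abs
    simpa using this
  obtain ⟨m, hm, hcoer⟩ := coercive hK Ω₀⁻¹ hA0
  have sqrtle : ∀ a b : ℝ, 0 ≤ a → 0 ≤ b → Real.sqrt a ≤ Real.sqrt b → a ≤ b := by
    intro a b ha hb h
    nlinarith [Real.sq_sqrt ha, Real.sq_sqrt hb, Real.sqrt_nonneg a, Real.sqrt_nonneg b]
  have hpmin' : ∀ n, ∀ x : Fin K → ℝ, (∀ j, x j ≤ 0) → w n ⬝ᵥ x = 0 →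
      (y n - p n) ⬝ᵥ A n *ᵥ (y n - p n) ≤ (y n - x) ⬝ᵥ A n *ᵥ (y n - x) := by
    intro n x h1 h2
    have h := hpmin n x h1 h2
    simp only [wnorm] at h
    exact sqrtle _ _ (posdef_quad_nonneg (hAn n) _) (posdef_quad_nonneg (hAn n) _) h
  have hqmin' : ∀ n, ∀ x : Fin K → ℝ, (∀ j, x j ≤ 0) → w n ⬝ᵥ x = 0 →
      (y₀ - q n) ⬝ᵥ Ω₀⁻¹ *ᵥ (y₀ - q n) ≤ (y₀ - x) ⬝ᵥ Ω₀⁻¹ *ᵥ (y₀ - x) := by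
    intro n x h1 h2
    have h := hqmin n x h1 h2
    simp only [wnorm] at h
    exact sqrtle _ _ (posdef_quad_nonneg hA0 _) (posdef_quad_nonneg hA0 _) h
  set C0 : ℝ := y₀ ⬝ᵥ Ω₀⁻¹ *ᵥ y₀ with hC0
  set Sy : ℝ := ∑ j, (y₀ j) ^ 2 with hSy
  -- uniform bound for q
  have hqb : ∀ n, ∑ j, (q n j) ^ 2 ≤ 2 * Sy + 2 * (C0 / m) := by
    intro n
    have h1 := hqmin' n 0 (fun j => le_refl 0) (dotProduct_zero _)
    rw [sub_zero] at h1
    have h2 := hcoer (y₀ - q n)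
    have h3 : ∑ j, ((y₀ - q n) j) ^ 2 ≤ C0 / m := by
      rw [le_div_iff₀ hm]
      calc (∑ j, ((y₀ - q n) j) ^ 2) * m = m * ∑ j, ((y₀ - q n) j) ^ 2 := by ring
        _ ≤ (y₀ - q n) ⬝ᵥ Ω₀⁻¹ *ᵥ (y₀ - q n) := h2
        _ ≤ C0 := h1
    have h4 : ∀ j, (q n j) ^ 2 ≤ 2 * (y₀ j) ^ 2 + 2 * ((y₀ - q n) j) ^ 2 := by
      intro j
      have hj : (y₀ - q n) j = y₀ j - q n j := rfl
      rw [hj]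
      nlinarith [sq_nonneg (y₀ j + (y₀ j - q n j))]
    calc ∑ j, (q n j) ^ 2 ≤ ∑ j, (2 * (y₀ j) ^ 2 + 2 * ((y₀ - q n) j) ^ 2) :=
          Finset.sum_le_sum fun j _ => h4 j
      _ = 2 * Sy + 2 * ∑ j, ((y₀ - q n) j) ^ 2 := by
          rw [Finset.sum_add_distrib, ← Finset.mul_sum, ← Finset.mul_sum]
      _ ≤ 2 * Sy + 2 * (C0 / m) := by linarith
  -- eventual coercivity along A n
  have hev : ∀ᶠ n in atTop, ∀ v : Fin K → ℝ, m / 2 * ∑ j, v j ^ 2 ≤ v ⬝ᵥ A n *ᵥ v := by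
    filter_upwards [hdiff.eventually (gt_mem_nhds (half_pos hm))] with n hn v
    have h1 := (abs_le.mp (quad_abs_le (A n - Ω₀⁻¹) v)).1
    have h3 : v ⬝ᵥ (A n - Ω₀⁻¹) *ᵥ v = v ⬝ᵥ A n *ᵥ v - v ⬝ᵥ Ω₀⁻¹ *ᵥ v := by
      rw [Matrix.sub_mulVec, dotProduct_sub]
    rw [h3] at h1
    have h2 := hcoer v
    have hS : (0:ℝ) ≤ ∑ j, v j ^ 2 := Finset.sum_nonneg fun j _ => sq_nonneg _
    have h4 : (∑ i, ∑ j, |(A n - Ω₀⁻¹) i j|) * ∑ j, v j ^ 2 ≤ m / 2 * ∑ j, v j ^ 2 :=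
      mul_le_mul_of_nonneg_right hn.le hS
    linarith
  -- eventual bounds from convergence
  have hBy : Tendsto (fun n => y n ⬝ᵥ A n *ᵥ y n) atTop (nhds C0) :=
    quad_tendsto hAconv hyconv
  have hSyt : Tendsto (fun n => ∑ j, (y n j) ^ 2) atTop (nhds Sy) :=
    tendsto_finset_sum _ fun j _ => ((tendsto_pi_nhds.mp hyconv j).pow 2)
  have hpb_ev : ∀ᶠ n in atTop,
      ∑ j, (p n j) ^ 2 ≤ 2 * (Sy + 1) + 2 * ((C0 + 1) / (m / 2)) := by
    filter_upwards [hev, hBy.eventually (eventually_le_nhds (lt_add_one C0)),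
      hSyt.eventually (eventually_le_nhds (lt_add_one Sy))] with n h1 h2 h3
    have h4 := hpmin' n 0 (fun j => le_refl 0) (dotProduct_zero _)
    rw [sub_zero] at h4
    have h5 := h1 (y n - p n)
    have h6 : ∑ j, ((y n - p n) j) ^ 2 ≤ (C0 + 1) / (m / 2) := by
      rw [le_div_iff₀ (half_pos hm)]
      calc (∑ j, ((y n - p n) j) ^ 2) * (m / 2) = m / 2 * ∑ j, ((y n - p n) j) ^ 2 := by ring
        _ ≤ (y n - p n) ⬝ᵥ A n *ᵥ (y n - p n) := h5
        _ ≤ y n ⬝ᵥ A n *ᵥ y n := h4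
        _ ≤ C0 + 1 := h2
    have h7 : ∀ j, (p n j) ^ 2 ≤ 2 * (y n j) ^ 2 + 2 * ((y n - p n) j) ^ 2 := by
      intro j
      have hj : (y n - p n) j = y n j - p n j := rfl
      rw [hj]
      nlinarith [sq_nonneg (y n j + (y n j - p n j))]
    calc ∑ j, (p n j) ^ 2 ≤ ∑ j, (2 * (y n j) ^ 2 + 2 * ((y n - p n) j) ^ 2) :=
          Finset.sum_le_sum fun j _ => h7 j
      _ = 2 * ∑ j, (y n j) ^ 2 + 2 * ∑ j, ((y n - p n) j) ^ 2 := by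
          rw [Finset.sum_add_distrib, ← Finset.mul_sum, ← Finset.mul_sum]
      _ ≤ 2 * (Sy + 1) + 2 * ((C0 + 1) / (m / 2)) := by linarith
  obtain ⟨Rp, hRp⟩ := aux_bdd _ _ hpb_ev
  set Rq : ℝ := 2 * Sy + 2 * (C0 / m) with hRq
  set R : ℝ := Real.sqrt (max Rp Rq) with hR
  have hball : ∀ v : Fin K → ℝ, ∑ j, v j ^ 2 ≤ max Rp Rq →
      v ∈ Metric.closedBall (0 : Fin K → ℝ) R := by
    intro v hv
    rw [Metric.mem_closedBall, dist_zero_right]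
    refine (pi_norm_le_iff_of_nonneg (Real.sqrt_nonneg _)).mpr fun j => ?_
    have h1 : v j ^ 2 ≤ max Rp Rq :=
      le_trans (Finset.single_le_sum (f := fun j => v j ^ 2)
        (fun j _ => sq_nonneg (v j)) (Finset.mem_univ j)) hv
    have h2 : Real.sqrt (v j ^ 2) ≤ R := Real.sqrt_le_sqrt h1
    rwa [Real.sqrt_sq_eq_abs] at h2
  have hpball : ∀ n, p n ∈ Metric.closedBall (0 : Fin K → ℝ) R := fun n =>
    hball _ ((hRp n).trans (le_max_left _ _))
  have hqball : ∀ n, q n ∈ Metric.closedBall (0 : Fin K → ℝ) R := fun n =>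
    hball _ ((hqb n).trans (le_max_right _ _))
  -- subsequence argument
  apply tendsto_of_subseq_tendsto
  intro ns hns
  obtain ⟨ps, -, φ, hφmono, hφ⟩ :=
    tendsto_subseq_of_bounded (Metric.isBounded_closedBall (x := (0 : Fin K → ℝ)) (r := R))
      (fun k => hpball (ns k))
  obtain ⟨qs, -, ψ, hψmono, hψ⟩ :=
    tendsto_subseq_of_bounded (Metric.isBounded_closedBall (x := (0 : Fin K → ℝ)) (r := R))
      (fun k => hqball (ns (φ k)))
  set θ : ℕ → ℕ := fun k => ns (φ (ψ k)) with hθdef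
  have hθ : Tendsto θ atTop atTop := hns.comp (hφmono.comp hψmono).tendsto_atTop
  have hps : Tendsto (fun k => p (θ k)) atTop (nhds ps) := hφ.comp hψmono.tendsto_atTop
  have hqs : Tendsto (fun k => q (θ k)) atTop (nhds qs) := hψ
  have hyθ : Tendsto (fun k => y (θ k)) atTop (nhds y₀) := hyconv.comp hθ
  have hAθ : Tendsto (fun k => A (θ k)) atTop (nhds Ω₀⁻¹) := hAconv.comp hθ
  have L1 : Tendsto (fun k => (y (θ k) - p (θ k)) ⬝ᵥ A (θ k) *ᵥ (y (θ k) - p (θ k)))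
      atTop (nhds ((y₀ - ps) ⬝ᵥ Ω₀⁻¹ *ᵥ (y₀ - ps))) :=
    quad_tendsto hAθ (hyθ.sub hps)
  have L2 : Tendsto (fun k => (y (θ k) - q (θ k)) ⬝ᵥ A (θ k) *ᵥ (y (θ k) - q (θ k)))
      atTop (nhds ((y₀ - qs) ⬝ᵥ Ω₀⁻¹ *ᵥ (y₀ - qs))) :=
    quad_tendsto hAθ (hyθ.sub hqs)
  have L3 : Tendsto (fun k => (y₀ - q (θ k)) ⬝ᵥ Ω₀⁻¹ *ᵥ (y₀ - q (θ k)))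
      atTop (nhds ((y₀ - qs) ⬝ᵥ Ω₀⁻¹ *ᵥ (y₀ - qs))) :=
    quad_tendsto tendsto_const_nhds (tendsto_const_nhds.sub hqs)
  have hmidt : Tendsto (fun k => ((1:ℝ)/2) • (p (θ k) + q (θ k))) atTop
      (nhds (((1:ℝ)/2) • (ps + qs))) := (hps.add hqs).const_smul _
  have L4 : Tendsto (fun k => (y₀ - ((1:ℝ)/2) • (p (θ k) + q (θ k))) ⬝ᵥ Ω₀⁻¹ *ᵥ
      (y₀ - ((1:ℝ)/2) • (p (θ k) + q (θ k)))) atTop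
      (nhds ((y₀ - ((1:ℝ)/2) • (ps + qs)) ⬝ᵥ Ω₀⁻¹ *ᵥ (y₀ - ((1:ℝ)/2) • (ps + qs)))) :=
    quad_tendsto tendsto_const_nhds (tendsto_const_nhds.sub hmidt)
  have I1 : (y₀ - ps) ⬝ᵥ Ω₀⁻¹ *ᵥ (y₀ - ps) ≤ (y₀ - qs) ⬝ᵥ Ω₀⁻¹ *ᵥ (y₀ - qs) :=
    le_of_tendsto_of_tendsto' L1 L2 fun k =>
      hpmin' (θ k) (q (θ k)) (hqmem (θ k)).1 (hqmem (θ k)).2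
  have hmidfeas : ∀ n, (∀ j, (((1:ℝ)/2) • (p n + q n)) j ≤ 0) ∧
      w n ⬝ᵥ (((1:ℝ)/2) • (p n + q n)) = 0 := by
    intro n
    constructor
    · intro j
      have h1 := (hpmem n).1 j
      have h2 := (hqmem n).1 j
      have : (((1:ℝ)/2) • (p n + q n)) j = (1:ℝ)/2 * (p n j + q n j) := rfl
      rw [this]; linarith
    · rw [dotProduct_smul, dotProduct_add, (hpmem n).2, (hqmem n).2]
      simp
  have I2 : (y₀ - qs) ⬝ᵥ Ω₀⁻¹ *ᵥ (y₀ - qs) ≤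
      (y₀ - ((1:ℝ)/2) • (ps + qs)) ⬝ᵥ Ω₀⁻¹ *ᵥ (y₀ - ((1:ℝ)/2) • (ps + qs)) :=
    le_of_tendsto_of_tendsto' L3 L4 fun k =>
      hqmin' (θ k) _ (hmidfeas (θ k)).1 (hmidfeas (θ k)).2
  have hmid : y₀ - ((1:ℝ)/2) • (ps + qs) = ((1:ℝ)/2) • ((y₀ - ps) + (y₀ - qs)) := by
    funext j
    simp only [Pi.sub_apply, Pi.smul_apply, Pi.add_apply, smul_eq_mul]
    ring
  have hsub : (y₀ - ps) - (y₀ - qs) = qs - ps := by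
    funext j
    simp only [Pi.sub_apply]
    ring
  have hpar := quad_parallelogram Ω₀⁻¹ (y₀ - ps) (y₀ - qs)
  rw [hsub] at hpar
  rw [hmid, hpar] at I2
  have hle : (qs - ps) ⬝ᵥ Ω₀⁻¹ *ᵥ (qs - ps) ≤ 0 := by linarith
  have heq : ps = qs := by
    by_contra h
    have hne : qs - ps ≠ 0 := fun hc => h (by
      have := sub_eq_zero.mp hc
      exact this.symm)
    exact absurd hle (not_le.mpr (posdef_quad_pos hA0 hne))
  refine ⟨φ ∘ ψ, ?_⟩
  have hsum : Tendsto (fun k => ∑ j, (p (θ k) j - q (θ k) j) ^ 2) atTop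
      (nhds (∑ j, (ps j - qs j) ^ 2)) :=
    tendsto_finset_sum _ fun j _ =>
      ((tendsto_pi_nhds.mp hps j).sub (tendsto_pi_nhds.mp hqs j)).pow 2
  have h0 : ∑ j, (ps j - qs j) ^ 2 = 0 := by simp [heq]
  rw [h0] at hsum
  have := (Real.continuous_sqrt.tendsto 0).comp hsum
  simpa [Function.comp_def, hθdef] using this
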